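/- Let R be a standard graded Noetherian ring with R_0 = A and let X be a graded R-module with finitely generated components vanishing in low degrees. Set Y = X / H⁰_{R₊}(X). Then Ass_A X = Ass_A Y ∪ Ass_A H⁰_{R₊}(X). Moreover, if P ∈ Ass_A Y_s for some s, then P ∈ Ass_A X_{s+r} for some r ≥ 1. -/

import Mathlib

open Pointwise


/-- The `I`-torsion submodule `H⁰_I(X) = { x | I^k x = 0 for some k }`. -/
def H0 {R : Type} [CommRing R] (I : Ideal R) (X : Type) [AddCommGroup X] [Module R X] :
    Submodule R X :=
  ⨆ k : ℕ, Submodule.torsionBySet R X ((I ^ k : Ideal R) : Set R)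

/-- Let `R` be a standard graded Noetherian ring with `R_0 = A` and `X` a graded
`R`-module with finitely generated components vanishing in low degrees.  Set
`Y = X / H⁰_{R₊}(X)`.  Then `Ass_A X = Ass_A Y ∪ Ass_A H⁰_{R₊}(X)`, and moreover if
`P ∈ Ass_A Y_s` then `P ∈ Ass_A X_{s+r}` for some `r ≥ 1`. -/

lemma memH0 {R : Type} [CommRing R] (I : Ideal R) {X : Type} [AddCommGroup X] [Module R X]
    (z : X) : z ∈ H0 I X ↔ ∃ k : ℕ, ∀ f ∈ I ^ k, f • z = 0 := by
  have hdir : Directed (· ≤ ·)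
      (fun k : ℕ => Submodule.torsionBySet R X ((I ^ k : Ideal R) : Set R)) := by
    have hmono : Monotone
        (fun k : ℕ => Submodule.torsionBySet R X ((I ^ k : Ideal R) : Set R)) := by
      intro i j hij
      exact Submodule.torsionBySet_le_torsionBySet_of_subset (Ideal.pow_le_pow_right hij)
    exact hmono.directed_le
  rw [H0, Submodule.mem_iSup_of_directed _ hdir]
  refine exists_congr fun k => ?_
  rw [Submodule.mem_torsionBySet_iff]
  exact ⟨fun h f hf => h ⟨f, hf⟩, fun h a => h a a.2⟩

lemma finsubspan {R M : Type} [Semiring R] [AddCommMonoid M] [Module R M] {s : Set M}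
    (h : (Submodule.span R s).FG) :
    ∃ T : Finset M, ↑T ⊆ s ∧ Submodule.span R (↑T : Set M) = Submodule.span R s := by
  classical
  obtain ⟨S, hS⟩ := h
  have hmem : ∀ m ∈ S, ∃ T : Finset M, ↑T ⊆ s ∧ m ∈ Submodule.span R (↑T : Set M) := by
    intro m hm
    exact Submodule.mem_span_finite_of_mem_span (hS ▸ Submodule.subset_span hm)
  choose! f hf1 hf2 using hmem
  refine ⟨S.biUnion f, ?_, le_antisymm (Submodule.span_mono ?_) ?_⟩
  · intro m hm
    simp only [Finset.coe_biUnion, Set.mem_iUnion] at hm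
    obtain ⟨i, hi, him⟩ := hm
    exact hf1 i hi him
  · intro m hm
    simp only [Finset.coe_biUnion, Set.mem_iUnion] at hm
    obtain ⟨i, hi, him⟩ := hm
    exact hf1 i hi him
  · rw [← hS]
    refine Submodule.span_le.2 fun m hm => ?_
    exact Submodule.span_mono (by intro u hu; exact Finset.mem_coe.2 (Finset.mem_biUnion.2 ⟨m, hm, Finset.mem_coe.1 hu⟩)) (hf2 m hm)

lemma core {A : Type} [CommRing A] [IsNoetherianRing A]
    {R : Type} [CommRing R] [Algebra A R] [IsNoetherianRing R]
    (𝒜 : ℕ → Submodule A R) (hstd : ∀ n, 𝒜 n = 𝒜 1 ^ n)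
    {X : Type} [AddCommGroup X] [Module A X] [Module R X] [IsScalarTower A R X]
    (x : X) (P : Ideal A) (hP : P.IsPrime)
    (hmem : ∀ a : A, a • x ∈ H0 (Ideal.span ((𝒜 1 : Submodule A R) : Set R)) X ↔ a ∈ P) :
    ∃ k : ℕ, 1 ≤ k ∧ ∃ g ∈ 𝒜 k, ∀ a : A, a • (g • x) = 0 ↔ a ∈ P := by
  classical
  set I : Ideal R := Ideal.span ((𝒜 1 : Submodule A R) : Set R) with hI
  -- commuting scalars
  have hsc : ∀ (a : A) (g : R) (z : X), a • (g • z) = g • (a • z) := by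
    intro a g z
    rw [← algebraMap_smul R a z, ← algebraMap_smul R a (g • z), smul_smul, smul_smul, mul_comm]
  -- uniform k on a finite generating set of P
  obtain ⟨S, hS⟩ : ∃ S : Finset A, Ideal.span (↑S : Set A) = P :=
    (IsNoetherian.noetherian P : P.FG)
  have hfin : ∀ (s : Finset A), (∀ a ∈ s, a ∈ P) →
      ∃ k : ℕ, ∀ a ∈ s, ∀ f ∈ I ^ k, f • (a • x) = 0 := by
    intro s
    induction s using Finset.induction_on with
    | empty => exact fun _ => ⟨1, by simp⟩
    | @insert a s ha ih =>
      intro hmem'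
      obtain ⟨k₁, hk₁⟩ := ih fun b hb => hmem' b (Finset.mem_insert_of_mem hb)
      have hax : a • x ∈ H0 I X := (hmem a).2 (hmem' a (Finset.mem_insert_self a s))
      obtain ⟨k₂, hk₂⟩ := (memH0 I (a • x)).1 hax
      refine ⟨max k₁ k₂, fun b hb f hf => ?_⟩
      rcases Finset.mem_insert.1 hb with rfl | hb
      · exact hk₂ f (Ideal.pow_le_pow_right (le_max_right k₁ k₂) hf)
      · exact hk₁ b hb f (Ideal.pow_le_pow_right (le_max_left k₁ k₂) hf)
  obtain ⟨k₀, hk₀⟩ := hfin S fun a ha => hS ▸ Ideal.subset_span ha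
  set k : ℕ := max k₀ 1 with hk
  have hk1 : 1 ≤ k := le_max_right _ _
  have hPk : ∀ a ∈ P, ∀ f ∈ I ^ k, f • (a • x) = 0 := by
    intro a haP f hf
    have hf' : f ∈ I ^ k₀ := Ideal.pow_le_pow_right (le_max_left _ _) hf
    rw [← hS] at haP
    induction haP using Submodule.span_induction with
    | mem b hb => exact hk₀ b hb f hf'
    | zero => rw [zero_smul, smul_zero]
    | add b c _ _ hb hc => rw [add_smul, smul_add, hb, hc, add_zero]
    | smul c b _ hb => rw [smul_eq_mul, mul_smul, ← hsc, hb, smul_zero]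
  -- homogeneous finite generating set of I^k
  have hIk : I ^ k = Submodule.span R (((𝒜 1 : Submodule A R) : Set R) ^ k) := by
    rw [hI, Ideal.span, Submodule.span_pow]
  obtain ⟨T, hTsub, hTspan⟩ := finsubspan (s := ((𝒜 1 : Submodule A R) : Set R) ^ k)
    (by rw [← hIk]; exact IsNoetherian.noetherian _)
  rw [← hIk] at hTspan
  -- find g in T whose annihilator is exactly P
  by_contra hcon
  push_neg at hcon
  have hgood : ∀ g ∈ T, ∃ b : A, b • (g • x) = 0 ∧ b ∉ P := by
    intro g hg
    have hgA : g ∈ 𝒜 k := by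
      rw [hstd k]
      exact Submodule.pow_subset_pow (𝒜 1) (hTsub hg)
    have hgI : g ∈ I ^ k := hTspan ▸ Submodule.subset_span hg
    rcases hcon k hk1 g hgA with ⟨b, hb⟩
    rcases hb with ⟨h0, hbP⟩ | ⟨h0, hbP⟩
    · exact ⟨b, h0, hbP⟩
    · exact absurd (by rw [hsc]; exact hPk b hbP g hgI) h0
  choose β hβ0 hβP using hgood
  set b : A := ∏ t ∈ T.attach, β t.1 t.2 with hb
  have hbP : b ∉ P := by
    intro hbmem
    rw [hb, Ideal.IsPrime.prod_mem_iff] at hbmem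
    obtain ⟨t, _, ht⟩ := hbmem
    exact hβP t.1 t.2 ht
  have hbg : ∀ g ∈ T, b • (g • x) = 0 := by
    intro g hg
    have hsplit : b = β g hg * ∏ t ∈ T.attach.erase ⟨g, hg⟩, β t.1 t.2 :=
      (Finset.mul_prod_erase T.attach (fun t => β t.1 t.2)
        (Finset.mem_attach T ⟨g, hg⟩)).symm
    rw [hsplit, mul_comm, mul_smul, hβ0 g hg, smul_zero]
  have hbx : b • x ∈ H0 I X := by
    rw [memH0]
    refine ⟨k, fun f hf => ?_⟩
    rw [← hTspan] at hf
    induction hf using Submodule.span_induction with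
    | mem g hg => rw [← hsc]; exact hbg g hg
    | zero => rw [zero_smul]
    | add u v _ _ hu hv => rw [add_smul, hu, hv, add_zero]
    | smul r u _ hu => rw [smul_eq_mul, mul_smul, hu, smul_zero]
  exact hbP ((hmem b).1 hbx)

theorem stmt3 (A : Type) [CommRing A] [IsNoetherianRing A]
    (R : Type) [CommRing R] [Algebra A R] [IsNoetherianRing R]
    (𝒜 : ℕ → Submodule A R) [GradedAlgebra 𝒜] (hstd : ∀ n, 𝒜 n = 𝒜 1 ^ n)
    (X : Type) [AddCommGroup X] [Module A X] [Module R X] [IsScalarTower A R X]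
    (ℳ : ℤ → Submodule A X) [DirectSum.Decomposition ℳ]
    (hsmul : ∀ (i : ℕ) (n : ℤ), ∀ r ∈ 𝒜 i, ∀ x ∈ ℳ n, r • x ∈ ℳ (n + i))
    (hfg : ∀ n, (ℳ n).FG) (hvan : ∃ n₀ : ℤ, ∀ n < n₀, ℳ n = ⊥) :
    associatedPrimes A X =
      associatedPrimes A (X ⧸ ((H0 (Ideal.span (𝒜 1 : Set R)) X).restrictScalars A)) ∪
        associatedPrimes A ↥((H0 (Ideal.span (𝒜 1 : Set R)) X).restrictScalars A) ∧
    ∀ (P : Ideal A) (s : ℤ),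
      P ∈ associatedPrimes A
        ↥((ℳ s).map (((H0 (Ideal.span (𝒜 1 : Set R)) X).restrictScalars A).mkQ)) →
      ∃ r : ℤ, 1 ≤ r ∧ P ∈ associatedPrimes A (ℳ (s + r)) := by
  have core : ∀ (x : X) (P : Ideal A), P.IsPrime →
      (∀ a : A, a • x ∈ H0 (Ideal.span ((𝒜 1 : Submodule A R) : Set R)) X ↔ a ∈ P) →
      ∃ k : ℕ, 1 ≤ k ∧ ∃ g ∈ 𝒜 k, ∀ a : A, a • (g • x) = 0 ↔ a ∈ P :=
    fun x P hP hmem => core 𝒜 hstd x P hP hmem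
  classical
  set I : Ideal R := Ideal.span ((𝒜 1 : Submodule A R) : Set R) with hI
  set H : Submodule A X := (H0 I X).restrictScalars A with hH
  constructor
  · ext P
    simp only [Set.mem_union]
    constructor
    · intro hPa
      obtain ⟨hP, x, hx⟩ := isAssociatedPrime_iff.1 hPa
      have hxiff : ∀ c : A, c ∈ P ↔ c • x = 0 := fun c => by
        rw [hx, Submodule.mem_colon_singleton, Submodule.mem_bot]
      by_cases hcase : ∃ a, a ∉ P ∧ a • x ∈ H
      · right
        obtain ⟨a, haP, haH⟩ := hcase
        refine isAssociatedPrime_iff.2 ⟨hP, ⟨a • x, haH⟩, ?_⟩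
        ext b
        rw [Submodule.mem_colon_singleton, Submodule.mem_bot]
        have hcoe : (b • (⟨a • x, haH⟩ : ↥H) = 0) ↔ b • (a • x) = 0 := by
          simp [Subtype.ext_iff]
        rw [hcoe, ← mul_smul, ← hxiff]
        constructor
        · intro hb; exact Ideal.mul_mem_right a P hb
        · intro hba; exact (hP.mem_or_mem hba).resolve_right haP
      · left
        push_neg at hcase
        refine isAssociatedPrime_iff.2 ⟨hP, Submodule.Quotient.mk x, ?_⟩
        ext b
        rw [Submodule.mem_colon_singleton, Submodule.mem_bot, ← Submodule.Quotient.mk_smul,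
          Submodule.Quotient.mk_eq_zero]
        constructor
        · intro hb
          rw [(hxiff b).1 hb]; exact zero_mem _
        · intro hbH
          by_contra hbP
          exact hcase b hbP hbH
    · rintro (hPa | ⟨hP, z, hz⟩)
      · obtain ⟨hP, y, hy⟩ := isAssociatedPrime_iff.1 hPa
        obtain ⟨x, hx⟩ := Submodule.mkQ_surjective H y
        have hmem : ∀ a : A, a • x ∈ H0 I X ↔ a ∈ P := by
          intro a
          have : a ∈ P ↔ a • y = 0 := by
            rw [hy, Submodule.mem_colon_singleton, Submodule.mem_bot]
          rw [this, ← hx]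
          rw [show (H.mkQ x : X ⧸ H) = Submodule.Quotient.mk x from rfl,
            ← Submodule.Quotient.mk_smul, Submodule.Quotient.mk_eq_zero]
          exact Iff.rfl
        obtain ⟨k, hk1, g, hgA, hgiff⟩ := core x P hP hmem
        refine isAssociatedPrime_iff.2 ⟨hP, g • x, ?_⟩
        ext b
        rw [Submodule.mem_colon_singleton, Submodule.mem_bot]
        exact (hgiff b).symm
      · exact IsAssociatedPrime.map_of_injective H.subtype ⟨hP, z, hz⟩
          (Submodule.injective_subtype H)
  · intro P s hPmem
    obtain ⟨hP, y, hy⟩ := isAssociatedPrime_iff.1 hPmem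
    obtain ⟨x, hxs, hx⟩ := Submodule.mem_map.1 y.2
    have hmem : ∀ a : A, a • x ∈ H0 I X ↔ a ∈ P := by
      intro a
      have h1 : a ∈ P ↔ a • y = 0 := by
        rw [hy, Submodule.mem_colon_singleton, Submodule.mem_bot]
      have h2 : a • y = 0 ↔ a • (y : X ⧸ H) = 0 := by
        simp [Subtype.ext_iff]
      rw [h1, h2, ← hx]
      rw [show (H.mkQ x : X ⧸ H) = Submodule.Quotient.mk x from rfl,
        ← Submodule.Quotient.mk_smul, Submodule.Quotient.mk_eq_zero]
      exact Iff.rfl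
    obtain ⟨k, hk1, g, hgA, hgiff⟩ := core x P hP hmem
    have hz : g • x ∈ ℳ (s + k) := hsmul k s g hgA x hxs
    refine ⟨(k : ℤ), by exact_mod_cast hk1, isAssociatedPrime_iff.2 ⟨hP, ⟨g • x, hz⟩, ?_⟩⟩
    ext b
    rw [Submodule.mem_colon_singleton, Submodule.mem_bot]
    have hcoe : (b • (⟨g • x, hz⟩ : ↥(ℳ (s + k))) = 0) ↔ b • (g • x) = 0 := by
      simp [Subtype.ext_iff]
    rw [hcoe]
    exact (hgiff b).symm
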